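/- Let x be a clustered graph signal of the form x[i] = Σ_l a_l·1_{C_l}[i] for the partition F, with noisy samples y[i] = x[i] + e[i] on a sampling set M ⊆ V, and let x̂ be any minimizer of the network Lasso objective Σ_{i∈M} |x̃[i] − y[i]| + λ·‖x̃‖_TV with λ > 0. Then, writing x̃ := x̂ − x, the inequality Σ_{i∈M} |x̃[i]| + λ·‖x̃‖_{E∖∂F} ≤ λ·‖x̃‖_{∂F} + 2·Σ_{i∈M} |e[i]| holds. -/

import Mathlib

open Finset

variable {V ι : Type*}

/-- Sum of `W i j * |x i − x j|` over a symmetric set `S` of directed edges,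
counting each undirected edge `{i,j}` exactly once (hence the division by 2). -/
noncomputable def edgeNorm (W : V → V → ℝ) (S : Finset (V × V)) (x : V → ℝ) : ℝ :=
  (∑ p ∈ S, W p.1 p.2 * |x p.1 - x p.2|) / 2

/-- The neighbourhood `N(i)` of a node `i`. -/
def nbhd [Fintype V] [DecidableEq V] (E : Finset (V × V)) (i : V) : Finset V :=
  Finset.univ.filter fun j => (i, j) ∈ E

/-- The demand induced by the flow `h` at node `i`:
`d[i] = Σ_{j ∈ N(i)} (h(j,i) − h(i,j))`. -/
noncomputable def demand [Fintype V] [DecidableEq V] (E : Finset (V × V))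
    (h : V → V → ℝ) (i : V) : ℝ :=
  ∑ j ∈ nbhd E i, (h j i - h i j)

/-- The boundary `∂F` of the partition with cluster assignment `cl`:
edges whose endpoints lie in different clusters. -/
def bdry [DecidableEq V] [DecidableEq ι] (E : Finset (V × V)) (cl : V → ι) :
    Finset (V × V) :=
  E.filter fun p => cl p.1 ≠ cl p.2

/-- The nodes `B(F)` incident to at least one boundary edge. -/
def bdryNodes [Fintype V] [DecidableEq V] [DecidableEq ι] (E : Finset (V × V))
    (cl : V → ι) : Finset V :=
  Finset.univ.filter fun i => ∃ j, (i, j) ∈ bdry E cl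

/-- The sampling set `M` resolves the partition `cl` with constants `K, L`:
for every choice of bits `b` on the boundary edges (one bit per undirected
boundary edge, encoded by `b (j,i) = !b (i,j)`), there is a flow `h` obeying
the capacity constraints on intra-cluster edges, carrying flow `L·W[i,j]` in
the direction selected by the bit on every boundary edge, and whose demands
satisfy `|d[i]| ≤ K` on `M` and `d[i] = 0` off `M`. -/
def Resolves [Fintype V] [DecidableEq V] [DecidableEq ι] (E : Finset (V × V))
    (W : V → V → ℝ) (cl : V → ι) (M : Finset V) (K L : ℝ) : Prop :=
  ∀ b : V × V → Bool, (∀ p ∈ bdry E cl, b (p.2, p.1) = !b p) →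
    ∃ h : V → V → ℝ,
      (∀ p ∈ E \ bdry E cl, |h p.1 p.2| ≤ W p.1 p.2) ∧
      (∀ p ∈ bdry E cl, h p.1 p.2 = (if b p then (1 : ℝ) else 0) * (L * W p.1 p.2)) ∧
      (∀ i ∈ M, |demand E h i| ≤ K) ∧
      (∀ i, i ∉ M → demand E h i = 0)

/-- For a clustered signal `x` and any nLasso minimizer `x̂`,
writing `x̃ = x̂ − x`, one has
`Σ_{i∈M}|x̃[i]| + λ‖x̃‖_{E∖∂F} ≤ λ‖x̃‖_{∂F} + 2·Σ_{i∈M}|e[i]|`. -/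
theorem minimizer_error_inequality
    [Fintype V] [DecidableEq V] [DecidableEq ι]
    (E : Finset (V × V)) (W : V → V → ℝ)
    (hEsymm : ∀ i j : V, (i, j) ∈ E → (j, i) ∈ E)
    (hEirr : ∀ i : V, (i, i) ∉ E)
    (hWsymm : ∀ i j : V, W i j = W j i)
    (hWpos : ∀ p ∈ E, 0 < W p.1 p.2)
    (hWzero : ∀ i j : V, (i, j) ∉ E → W i j = 0)
    (cl : V → ι) (a : ι → ℝ) (x : V → ℝ) (hx : ∀ i, x i = a (cl i))
    (M : Finset V) (e y : V → ℝ) (hy : ∀ i ∈ M, y i = x i + e i)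
    (lam : ℝ) (hlam : 0 < lam)
    (xhat : V → ℝ)
    (hmin : ∀ z : V → ℝ,
      (∑ i ∈ M, |xhat i - y i|) + lam * edgeNorm W E xhat ≤
        (∑ i ∈ M, |z i - y i|) + lam * edgeNorm W E z) :
    (∑ i ∈ M, |xhat i - x i|) +
        lam * edgeNorm W (E \ bdry E cl) (fun i => xhat i - x i) ≤
      lam * edgeNorm W (bdry E cl) (fun i => xhat i - x i) +
        2 * ∑ i ∈ M, |e i| := by
  classical
  set B := bdry E cl with hB
  have hBsub : B ⊆ E := Finset.filter_subset _ _
  have hsplit : ∀ z : V → ℝ, edgeNorm W E z =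
      edgeNorm W (E \ B) z + edgeNorm W B z := by
    intro z
    unfold edgeNorm
    rw [← Finset.sum_sdiff hBsub]
    ring
  have hconst : ∀ p ∈ E \ B, x p.1 = x p.2 := by
    intro p hp
    rw [Finset.mem_sdiff] at hp
    have hne : ¬ cl p.1 ≠ cl p.2 := fun hne =>
      hp.2 (Finset.mem_filter.mpr ⟨hp.1, hne⟩)
    rw [hx, hx, not_not.mp hne]
  have h2 : edgeNorm W (E \ B) xhat =
      edgeNorm W (E \ B) (fun i => xhat i - x i) := by
    unfold edgeNorm
    congr 1
    refine Finset.sum_congr rfl fun p hp => ?_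
    have := hconst p hp
    congr 1
    rw [show (xhat p.1 - x p.1) - (xhat p.2 - x p.2)
        = xhat p.1 - xhat p.2 - (x p.1 - x p.2) by ring, this]
    ring_nf
  have h1 : edgeNorm W (E \ B) x = 0 := by
    unfold edgeNorm
    rw [Finset.sum_eq_zero]
    · simp
    intro p hp
    rw [hconst p hp]
    simp
  have h3 : edgeNorm W B x ≤ edgeNorm W B xhat
      + edgeNorm W B (fun i => xhat i - x i) := by
    unfold edgeNorm
    rw [← add_div]
    have hsum : (∑ p ∈ B, W p.1 p.2 * |x p.1 - x p.2|) ≤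
        ∑ p ∈ B, (W p.1 p.2 * |xhat p.1 - xhat p.2|
          + W p.1 p.2 * |(xhat p.1 - x p.1) - (xhat p.2 - x p.2)|) := by
      refine Finset.sum_le_sum fun p hp => ?_
      have hw : 0 ≤ W p.1 p.2 := (hWpos p (hBsub hp)).le
      have habs : |x p.1 - x p.2| ≤ |xhat p.1 - xhat p.2|
          + |(xhat p.1 - x p.1) - (xhat p.2 - x p.2)| := by
        have := abs_sub (xhat p.1 - xhat p.2) ((xhat p.1 - x p.1) - (xhat p.2 - x p.2))
        calc |x p.1 - x p.2|
            = |(xhat p.1 - xhat p.2) - ((xhat p.1 - x p.1) - (xhat p.2 - x p.2))| := by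
              ring_nf
          _ ≤ _ := abs_sub _ _
      nlinarith [mul_le_mul_of_nonneg_left habs hw]
    rw [Finset.sum_add_distrib] at hsum
    linarith
  have hyM : ∀ i ∈ M, |x i - y i| = |e i| := by
    intro i hi
    rw [hy i hi]
    rw [show x i - (x i + e i) = -(e i) by ring, abs_neg]
  have h4 : (∑ i ∈ M, |xhat i - x i|) ≤
      (∑ i ∈ M, |xhat i - y i|) + ∑ i ∈ M, |e i| := by
    rw [← Finset.sum_add_distrib]
    refine Finset.sum_le_sum fun i hi => ?_
    calc |xhat i - x i| = |(xhat i - y i) + e i| := by rw [hy i hi]; ring_nf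
      _ ≤ |xhat i - y i| + |e i| := abs_add_le _ _
  have hkey := hmin x
  rw [Finset.sum_congr rfl hyM] at hkey
  have hsx : edgeNorm W E x = edgeNorm W B x := by rw [hsplit x, h1]; ring
  have hsxhat : edgeNorm W E xhat =
      edgeNorm W (E \ B) (fun i => xhat i - x i) + edgeNorm W B xhat := by
    rw [hsplit xhat, h2]
  rw [hsx, hsxhat] at hkey
  have hl3 := mul_le_mul_of_nonneg_left h3 hlam.le
  nlinarith [hkey, h4, hl3]
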